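/- Let (Ω, 𝓕) be a measurable space, S a Polish space, and let μ : Ω × 𝓑(S) → [0,1] and ν : Ω × 𝓑(S) → [0,1] be probability kernels (i.e., Markov kernels from Ω to S). Let G ⊂ C_b(S) be uniformly bounded and equicontinuous. Then the map ω ↦ ‖μ(ω,·) − ν(ω,·)‖_G is measurable. -/

import Mathlib

open MeasureTheory Filter Topology Set

/-- For Markov kernels `κ, η` from a measurable space `Ω` to a Polish
space `S` and a uniformly bounded equicontinuous family `G ⊆ C_b(S)`, the map
`ω ↦ ‖κ(ω,·) - η(ω,·)‖_G` is measurable. -/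
theorem stmt1 (Ω : Type*) [MeasurableSpace Ω]
    (S : Type*) [MetricSpace S] [CompleteSpace S]
    [TopologicalSpace.SeparableSpace S] [MeasurableSpace S] [BorelSpace S]
    (κ η : ProbabilityTheory.Kernel Ω S)
    [ProbabilityTheory.IsMarkovKernel κ] [ProbabilityTheory.IsMarkovKernel η]
    (G : Set (S → ℝ)) (hGcont : ∀ g ∈ G, Continuous g)
    (M : ℝ) (hGbdd : ∀ g ∈ G, ∀ x, |g x| ≤ M)
    (hGequi : Equicontinuous (fun g : G => (g : S → ℝ))) :
    Measurable (fun ω => ⨆ g ∈ G, |∫ x, g x ∂(κ ω) - ∫ x, g x ∂(η ω)|) := by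
  classical
  -- notation
  set F : (S → ℝ) → Ω → ℝ := fun g ω => |∫ x, g x ∂(κ ω) - ∫ x, g x ∂(η ω)| with hF
  -- measurability of each term
  have hmeas : ∀ g : S → ℝ, Continuous g → Measurable (F g) := by
    intro g hg
    have hsm : StronglyMeasurable (Function.uncurry fun (_ : Ω) (y : S) => g y) :=
      ((hg.measurable.comp measurable_snd).stronglyMeasurable)
    have h1 : Measurable fun ω => ∫ x, g x ∂(κ ω) :=
      (MeasureTheory.StronglyMeasurable.integral_kernel_prod_right (κ := κ) hsm).measurable
    have h2 : Measurable fun ω => ∫ x, g x ∂(η ω) :=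
      (MeasureTheory.StronglyMeasurable.integral_kernel_prod_right (κ := η) hsm).measurable
    exact (h1.sub h2).abs
  rcases G.eq_empty_or_nonempty with rfl | ⟨g₀, hg₀⟩
  · -- empty family: the function is constantly 0
    have : (fun ω => ⨆ g ∈ (∅ : Set (S → ℝ)), F g ω) = fun _ => (0 : ℝ) := by
      funext ω
      have : ∀ g : S → ℝ, (⨆ _ : g ∈ (∅ : Set (S → ℝ)), F g ω) = 0 := by
        intro g
        haveI : IsEmpty (g ∈ (∅ : Set (S → ℝ))) := by simp
        exact Real.iSup_of_isEmpty _
      simp only [this, ciSup_const]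
    rw [this]
    exact measurable_const
  -- nonempty case
  rcases isEmpty_or_nonempty Ω with hΩ | ⟨⟨ω₀⟩⟩
  · exact measurable_of_empty _
  -- S is nonempty since κ ω₀ is a probability measure
  have hSne : Nonempty S := by
    by_contra h
    have := (ProbabilityTheory.IsMarkovKernel.isProbabilityMeasure (κ := κ) ω₀).measure_univ
    rw [not_nonempty_iff] at h
    simp [Set.univ_eq_empty_iff.2 h] at this
  obtain ⟨x₀⟩ := hSne
  have hM0 : 0 ≤ M := (abs_nonneg _).trans (hGbdd g₀ hg₀ x₀)
  -- uniform bound on F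
  have hFbd : ∀ g ∈ G, ∀ ω, F g ω ≤ M + M := by
    intro g hg ω
    have hb : ∀ (μ : Measure S), IsProbabilityMeasure μ → |∫ x, g x ∂μ| ≤ M := by
      intro μ hμ
      have := MeasureTheory.norm_integral_le_of_norm_le_const (μ := μ) (f := g) (C := M)
        (Filter.Eventually.of_forall fun x => by simpa using hGbdd g hg x)
      simpa [hμ.measure_univ] using this
    calc F g ω ≤ |∫ x, g x ∂(κ ω)| + |∫ x, g x ∂(η ω)| := abs_sub _ _
    _ ≤ M + M := add_le_add (hb _ (ProbabilityTheory.IsMarkovKernel.isProbabilityMeasure ω))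
        (hb _ (ProbabilityTheory.IsMarkovKernel.isProbabilityMeasure ω))
  -- countable dense subset of S
  obtain ⟨D, hDcnt, hDdense⟩ := TopologicalSpace.exists_countable_dense S
  haveI : Countable ↥D := hDcnt.to_subtype
  -- restriction map to D
  set Φ : (S → ℝ) → (↥D → ℝ) := fun g d => g d with hΦ
  set A : Set (↥D → ℝ) := Φ '' G with hA
  haveI : Nonempty ↥A := ⟨⟨Φ g₀, ⟨g₀, hg₀, rfl⟩⟩⟩
  obtain ⟨c, hc_cnt, hc_dense⟩ := TopologicalSpace.exists_countable_dense ↥A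
  -- choose preimages in G
  have hψ : ∀ y : ↥A, ∃ g, g ∈ G ∧ Φ g = (y : ↥D → ℝ) := fun y => by
    obtain ⟨g, hg, hgy⟩ := y.2; exact ⟨g, hg, hgy⟩
  choose ψ hψG hψΦ using hψ
  set T : Set (S → ℝ) := ψ '' c with hT
  have hTcnt : T.Countable := hc_cnt.image _
  have hTne : T.Nonempty := (hc_dense.nonempty).image _
  have hTG : T ⊆ G := by rintro _ ⟨y, _, rfl⟩; exact hψG y
  obtain ⟨e, he⟩ := hTcnt.exists_eq_range hTne
  have heG : ∀ n, e n ∈ G := fun n => hTG (he ▸ Set.mem_range_self n)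
  -- the countable sup is measurable
  have hmeas' : Measurable fun ω => ⨆ n, F (e n) ω :=
    Measurable.iSup fun n => hmeas _ (hGcont _ (heG n))
  -- it remains to show the two functions are equal
  have key : ∀ ω, (⨆ g ∈ G, F g ω) = ⨆ n, F (e n) ω := by
    intro ω
    have hbdd_e : BddAbove (range fun n => F (e n) ω) := by
      refine ⟨M + M, ?_⟩; rintro _ ⟨n, rfl⟩; exact hFbd _ (heG n) ω
    -- every g ∈ G is approximated from T
    have hle : ∀ g ∈ G, F g ω ≤ ⨆ n, F (e n) ω := by
      intro g hg
      -- Φ g is a limit of a sequence from c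
      have hmem : (⟨Φ g, ⟨g, hg, rfl⟩⟩ : ↥A) ∈ closure c := by
        rw [hc_dense.closure_eq]; trivial
      rw [mem_closure_iff_seq_limit] at hmem
      obtain ⟨φ, hφc, hφlim⟩ := hmem
      set t : ℕ → (S → ℝ) := fun n => ψ (φ n) with ht
      have htT : ∀ n, t n ∈ T := fun n => ⟨φ n, hφc n, rfl⟩
      have htG : ∀ n, t n ∈ G := fun n => hTG (htT n)
      -- pointwise convergence on D
      have hD : ∀ d : ↥D, Tendsto (fun n => t n (d : S)) atTop (𝓝 (g (d : S))) := by
        intro d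
        have : Tendsto (fun n => (φ n : ↥D → ℝ)) atTop (𝓝 (Φ g)) :=
          (continuous_subtype_val.tendsto _).comp hφlim
        have := (continuous_apply d).tendsto (Φ g) |>.comp this
        simpa [hψΦ, Function.comp] using this.congr fun n => by
          rw [Function.comp_apply]; exact congrFun (hψΦ (φ n)).symm d
      -- equicontinuity ⇒ pointwise convergence everywhere
      have hequi : Equicontinuous (fun n : ℕ => t n) :=
        hGequi.comp fun n => (⟨t n, htG n⟩ : G)
      have hclosed : IsClosed {x : S | Tendsto (fun n => t n x) atTop (𝓝 (g x))} :=
        hequi.isClosed_setOf_tendsto (hGcont g hg)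
      have hall : ∀ x : S, Tendsto (fun n => t n x) atTop (𝓝 (g x)) := by
        intro x
        have : D ⊆ {x : S | Tendsto (fun n => t n x) atTop (𝓝 (g x))} := by
          intro d hd; exact hD ⟨d, hd⟩
        have := closure_minimal this hclosed
        rw [hDdense.closure_eq] at this
        exact this trivial
      -- dominated convergence for both integrals
      have hint : ∀ (μ : Measure S), IsProbabilityMeasure μ →
          Tendsto (fun n => ∫ x, t n x ∂μ) atTop (𝓝 (∫ x, g x ∂μ)) := by
        intro μ hμ
        refine MeasureTheory.tendsto_integral_of_dominated_convergence (fun _ => M)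
          (fun n => ((hGcont _ (htG n)).aestronglyMeasurable))
          (integrable_const M) (fun n => Filter.Eventually.of_forall fun x => by
            simpa using hGbdd _ (htG n) x)
          (Filter.Eventually.of_forall hall)
      have hFlim : Tendsto (fun n => F (t n) ω) atTop (𝓝 (F g ω)) := by
        have h1 := hint (κ ω) (ProbabilityTheory.IsMarkovKernel.isProbabilityMeasure ω)
        have h2 := hint (η ω) (ProbabilityTheory.IsMarkovKernel.isProbabilityMeasure ω)
        exact (h1.sub h2).abs
      refine le_of_tendsto hFlim (Filter.Eventually.of_forall fun n => ?_)
      obtain ⟨m, hm⟩ := (he ▸ htT n : t n ∈ range e)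
      calc F (t n) ω = F (e m) ω := by rw [hm]
      _ ≤ ⨆ k, F (e k) ω := le_ciSup hbdd_e m
    refine le_antisymm ?_ ?_
    · -- sup over G ≤ countable sup
      refine ciSup_le fun g => ?_
      by_cases hg : g ∈ G
      · exact le_of_eq_of_le (ciSup_pos hg) (hle g hg)
      · haveI : IsEmpty (g ∈ G) := ⟨hg⟩
        rw [Real.iSup_of_isEmpty]
        exact le_trans (abs_nonneg _) (le_ciSup hbdd_e 0)
    · -- countable sup ≤ sup over G
      have hbdd_G : BddAbove (range fun g => ⨆ _ : g ∈ G, F g ω) := by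
        refine ⟨M + M, ?_⟩
        rintro _ ⟨g, rfl⟩
        show (⨆ _ : g ∈ G, F g ω) ≤ M + M
        by_cases hg : g ∈ G
        · rw [ciSup_pos hg]; exact hFbd g hg ω
        · haveI : IsEmpty (g ∈ G) := ⟨hg⟩
          rw [Real.iSup_of_isEmpty]; positivity
      refine ciSup_le fun n => ?_
      have : F (e n) ω = ⨆ _ : e n ∈ G, F (e n) ω := (ciSup_pos (f := fun _ : e n ∈ G => F (e n) ω) (heG n)).symm
      rw [this]
      exact le_ciSup hbdd_G (e n)
  show Measurable (fun ω => ⨆ g ∈ G, F g ω)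
  simpa only [funext key] using hmeas'
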